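/- Let G = (V,E) be an n-vertex graph and let ρ = ⊗_{j=1}^{k} ρ_j be a k-fold product state with respect to a partition P₁,…,P_k of the n qubits. If (a,b) ∈ E with a ∈ Pᵢ and b ∈ Pⱼ for i ≠ j, then |Tr(S_a ρ)| + |Tr(S_b ρ)| + |Tr(S_a S_b ρ)| ≤ 1, where S_v = X_v ⊗ (⊗_{u∈N(v)} Z_u) are the graph-state stabilizer generators. -/

import Mathlib

open ComplexOrder
set_option linter.unusedSectionVars false

/-- The Pauli `X` matrix. -/
noncomputable def pX : Matrix (Fin 2) (Fin 2) ℂ := !![0, 1; 1, 0]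

/-- The Pauli `Z` matrix. -/
noncomputable def pZ : Matrix (Fin 2) (Fin 2) ℂ := !![1, 0; 0, -1]

/-- Tensor product of a family of one-qubit operators, as an operator on `n` qubits. -/
noncomputable def tensorOp {n : ℕ} (A : Fin n → Matrix (Fin 2) (Fin 2) ℂ) :
    Matrix (Fin n → Fin 2) (Fin n → Fin 2) ℂ :=
  Matrix.of fun f g => ∏ j, A j (f j) (g j)

/-- Graph-state stabilizer generator `Sᵢ = Xᵢ ⊗ (⊗_{j ∈ N(i)} Zⱼ)`. -/
noncomputable def stab {n : ℕ} (G : SimpleGraph (Fin n)) [DecidableRel G.Adj] (i : Fin n) :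
    Matrix (Fin n → Fin 2) (Fin n → Fin 2) ℂ :=
  tensorOp fun j => if j = i then pX else if G.Adj i j then pZ else 1

/-- The edges of `G`, each represented once as an ordered pair `(i, j)` with `i < j`. -/
def edgePairs {n : ℕ} (G : SimpleGraph (Fin n)) [DecidableRel G.Adj] :
    Finset (Fin n × Fin n) :=
  Finset.univ.filter fun p => p.1 < p.2 ∧ G.Adj p.1 p.2

/-- The criterion value `W^γ_G(ρ) = ∑_{i∈V} |⟨Sᵢ⟩_ρ| + γ ∑_{(i,j)∈E} |⟨SᵢSⱼ⟩_ρ|`. -/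
noncomputable def Wgraph {n : ℕ} (G : SimpleGraph (Fin n)) [DecidableRel G.Adj] (γ : ℝ)
    (ρ : Matrix (Fin n → Fin 2) (Fin n → Fin 2) ℂ) : ℝ :=
  (∑ i, ‖(stab G i * ρ).trace‖) +
    γ * ∑ p ∈ edgePairs G, ‖(stab G p.1 * stab G p.2 * ρ).trace‖

/-- Amplitudes of the graph state `|G⟩ = ∏_{(i,j)∈E} CZ_{ij} |+⟩^{⊗n}` in the computational
basis: `⟨x|G⟩ = 2^{-n/2} ∏_{(i,j)∈E} (-1)^{x_i x_j}`. -/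
noncomputable def graphStateVec {n : ℕ} (G : SimpleGraph (Fin n)) [DecidableRel G.Adj]
    (x : Fin n → Fin 2) : ℂ :=
  ((((Real.sqrt 2)⁻¹ : ℝ) ^ n : ℝ) : ℂ) *
    ∏ p ∈ edgePairs G, (-1 : ℂ) ^ ((x p.1 : ℕ) * (x p.2 : ℕ))

/-- The graph state density matrix `|G⟩⟨G|`. -/
noncomputable def graphState {n : ℕ} (G : SimpleGraph (Fin n)) [DecidableRel G.Adj] :
    Matrix (Fin n → Fin 2) (Fin n → Fin 2) ℂ :=
  Matrix.of fun f g => graphStateVec G f * star (graphStateVec G g)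

/-- Tensor product of states of the groups of qubits given by the partition `P`. -/
noncomputable def prodState {n k : ℕ} (P : Fin n → Fin k)
    (ρs : ∀ j : Fin k,
      Matrix ({v : Fin n // P v = j} → Fin 2) ({v : Fin n // P v = j} → Fin 2) ℂ) :
    Matrix (Fin n → Fin 2) (Fin n → Fin 2) ℂ :=
  Matrix.of fun f g => ∏ j, ρs j (fun v => f v.1) (fun v => g v.1)

/-! ### Auxiliary material -/

section Pauli

lemma pX_herm : pX.conjTranspose = pX := by
  ext i j; fin_cases i <;> fin_cases j <;> simp [pX, Matrix.conjTranspose_apply]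

lemma pZ_herm : pZ.conjTranspose = pZ := by
  ext i j; fin_cases i <;> fin_cases j <;> simp [pZ, Matrix.conjTranspose_apply]

lemma pXX : pX * pX = 1 := by
  ext i j; fin_cases i <;> fin_cases j <;>
    simp [pX, Matrix.mul_apply, Fin.sum_univ_two, Matrix.one_apply]

lemma pZZ : pZ * pZ = 1 := by
  ext i j; fin_cases i <;> fin_cases j <;>
    simp [pZ, Matrix.mul_apply, Fin.sum_univ_two, Matrix.one_apply]

lemma pXZ : pX * pZ = -(pZ * pX) := by
  ext i j; fin_cases i <;> fin_cases j <;>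
    simp [pX, pZ, Matrix.mul_apply, Fin.sum_univ_two]

lemma pZX : pZ * pX = -(pX * pZ) := by rw [pXZ, neg_neg]

lemma diag_comm {M N : Matrix (Fin 2) (Fin 2) ℂ} (hM : M = 1 ∨ M = pZ) (hN : N = 1 ∨ N = pZ) :
    M * N = N * M := by
  rcases hM with h | h <;> rcases hN with h' | h' <;> subst h <;> subst h' <;> simp

lemma diag_mul {M N : Matrix (Fin 2) (Fin 2) ℂ} (hM : M = 1 ∨ M = pZ) (hN : N = 1 ∨ N = pZ) :
    M * N = 1 ∨ M * N = pZ := by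
  rcases hM with h | h <;> rcases hN with h' | h' <;> subst h <;> subst h' <;>
    simp [pZZ]

lemma diag_offdiag {M : Matrix (Fin 2) (Fin 2) ℂ} (hM : M = 1 ∨ M = pZ) :
    (∀ x y : Fin 2, x ≠ y → M x y = 0) ∧ (∀ x, ‖M x x‖ = 1) := by
  rcases hM with h | h <;> subst h <;> constructor
  · intro x y hxy; exact Matrix.one_apply_ne hxy
  · intro x; simp [Matrix.one_apply]
  · intro x y hxy; fin_cases x <;> fin_cases y <;> simp_all [pZ]
  · intro x; fin_cases x <;> simp [pZ]

end Pauli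

section tOpSec
variable {V : Type*} [Fintype V] [DecidableEq V]

/-- Tensor product over an arbitrary finite index type. -/
noncomputable def tOp (A : V → Matrix (Fin 2) (Fin 2) ℂ) :
    Matrix (V → Fin 2) (V → Fin 2) ℂ :=
  Matrix.of fun f g => ∏ v, A v (f v) (g v)

lemma tOp_apply (A : V → Matrix (Fin 2) (Fin 2) ℂ) (f g) :
    tOp A f g = ∏ v, A v (f v) (g v) := rfl

lemma tOp_mul (A B : V → Matrix (Fin 2) (Fin 2) ℂ) :
    tOp A * tOp B = tOp fun v => A v * B v := by
  ext f h
  simp only [Matrix.mul_apply, tOp_apply]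
  calc ∑ g : V → Fin 2, (∏ v, A v (f v) (g v)) * ∏ v, B v (g v) (h v)
      = ∑ g : V → Fin 2, ∏ v, (A v (f v) (g v) * B v (g v) (h v)) := by
        simp [Finset.prod_mul_distrib]
    _ = ∏ v, ∑ x : Fin 2, A v (f v) x * B v x (h v) := by
        exact (Fintype.prod_sum (κ := fun _ : V => Fin 2)
          (fun v x => A v (f v) x * B v x (h v))).symm
    _ = ∏ v, (A v * B v) (f v) (h v) := by simp [Matrix.mul_apply]

lemma tOp_one : tOp (fun _ : V => (1 : Matrix (Fin 2) (Fin 2) ℂ)) = 1 := by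
  ext f g
  simp only [tOp_apply, Matrix.one_apply]
  by_cases h : f = g
  · subst h; simp
  · rw [if_neg h]
    obtain ⟨v, hv⟩ := Function.ne_iff.mp h
    exact Finset.prod_eq_zero (Finset.mem_univ v) (by simp [Matrix.one_apply, hv])

lemma tOp_conjTranspose (A : V → Matrix (Fin 2) (Fin 2) ℂ) :
    (tOp A).conjTranspose = tOp fun v => (A v).conjTranspose := by
  ext f g
  simp [tOp_apply, Matrix.conjTranspose_apply]

lemma tOp_smul (c : V → ℂ) (A : V → Matrix (Fin 2) (Fin 2) ℂ) :
    tOp (fun v => c v • A v) = (∏ v, c v) • tOp A := by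
  ext f g
  simp [tOp_apply, Finset.prod_mul_distrib, Matrix.smul_apply, mul_comm]

lemma tOp_pauli {A : V → Matrix (Fin 2) (Fin 2) ℂ}
    (h : ∀ v, A v = 1 ∨ A v = pX ∨ A v = pZ) :
    (tOp A).conjTranspose = tOp A ∧ tOp A * tOp A = 1 := by
  constructor
  · have he : (fun v => (A v).conjTranspose) = A := by
      funext v
      rcases h v with h' | h' | h' <;> rw [h']
      · exact Matrix.conjTranspose_one
      · exact pX_herm
      · exact pZ_herm
    rw [tOp_conjTranspose, he]
  · rw [tOp_mul,
      show (fun v => A v * A v) = (fun _ : V => (1 : Matrix (Fin 2) (Fin 2) ℂ)) from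
        funext fun v => by rcases h v with h' | h' | h' <;> rw [h'] <;> simp [pXX, pZZ],
      tOp_one]

lemma tOp_anticomm (A B : V → Matrix (Fin 2) (Fin 2) ℂ) (w : V)
    (hw : A w * B w = -(B w * A w))
    (hcomm : ∀ v, v ≠ w → A v * B v = B v * A v) :
    tOp A * tOp B = -(tOp B * tOp A) := by
  rw [tOp_mul, tOp_mul]
  have h1 : (fun v => A v * B v) = fun v => (if v = w then (-1 : ℂ) else 1) • (B v * A v) := by
    funext v
    by_cases h : v = w
    · subst h; simp [hw]
    · simp [h, hcomm v h]
  rw [h1, tOp_smul, Finset.prod_ite_eq' Finset.univ w (fun _ => (-1 : ℂ))]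
  simp

end tOpSec

section psd
variable {d : Type*} [Fintype d] [DecidableEq d]

lemma psd_diag_nonneg {ρ : Matrix d d ℂ} (hρ : ρ.PosSemidef) (x : d) : 0 ≤ ρ x x := by
  exact hρ.diag_nonneg

lemma psd_trace_nonneg {ρ : Matrix d d ℂ} (hρ : ρ.PosSemidef) : 0 ≤ ρ.trace :=
  Finset.sum_nonneg fun x _ => psd_diag_nonneg hρ x

lemma trace_mul_psd_nonneg {M ρ : Matrix d d ℂ} (hM : M.PosSemidef) (hρ : ρ.PosSemidef) :
    0 ≤ (M * ρ).trace := by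
  obtain ⟨B, hB⟩ : ∃ B : Matrix d d ℂ, ρ = star B * B := by
    open scoped MatrixOrder in exact CStarAlgebra.nonneg_iff_eq_star_mul_self.mp hρ.nonneg
  calc (0 : ℂ) ≤ (B * M * B.conjTranspose).trace := by
        have := psd_trace_nonneg (hM.conjTranspose_mul_mul_same B.conjTranspose)
        simpa using this
    _ = (M * ρ).trace := by
        rw [hB, Matrix.star_eq_conjTranspose, Matrix.trace_mul_cycle, Matrix.trace_mul_comm]

lemma abs_trace_le_one {M ρ : Matrix d d ℂ} (hρ : ρ.PosSemidef) (hρt : ρ.trace = 1)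
    (hdiag : ∀ x y, x ≠ y → M x y = 0) (habs : ∀ x, ‖M x x‖ ≤ 1) :
    ‖(M * ρ).trace‖ ≤ 1 := by
  have hM : (M * ρ).trace = ∑ x, M x x * ρ x x := by
    simp only [Matrix.trace, Matrix.diag, Matrix.mul_apply]
    refine Finset.sum_congr rfl fun x _ => ?_
    rw [Finset.sum_eq_single x]
    · intro y _ hy; rw [hdiag x y (Ne.symm hy), zero_mul]
    · intro h; exact absurd (Finset.mem_univ x) h
  have hd : ∀ x, ‖ρ x x‖ = (ρ x x).re := by
    intro x
    have h := psd_diag_nonneg hρ x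
    rw [Complex.le_def] at h
    simp only [Complex.zero_re, Complex.zero_im] at h
    have hz : ρ x x = (((ρ x x).re : ℝ) : ℂ) := Complex.ext rfl h.2.symm
    rw [hz]
    simp [Complex.norm_real, abs_of_nonneg h.1]
  calc ‖(M * ρ).trace‖ ≤ ∑ x, ‖M x x * ρ x x‖ := by
        rw [hM]; exact norm_sum_le _ _
    _ ≤ ∑ x, ‖ρ x x‖ := by
        refine Finset.sum_le_sum fun x _ => ?_
        rw [norm_mul]
        exact mul_le_of_le_one_left (norm_nonneg _) (habs x)
    _ = (ρ.trace).re := by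
        simp only [Matrix.trace, Matrix.diag, Complex.re_sum]
        exact Finset.sum_congr rfl fun x _ => hd x
    _ = 1 := by rw [hρt]; rfl

lemma conj_trace_mul {M ρ : Matrix d d ℂ} (hρh : ρ.conjTranspose = ρ) :
    (starRingEnd ℂ) ((M * ρ).trace) = (M.conjTranspose * ρ).trace := by
  calc (starRingEnd ℂ) ((M * ρ).trace) = ((M * ρ).conjTranspose).trace :=
        (Matrix.trace_conjTranspose _).symm
    _ = (ρ.conjTranspose * M.conjTranspose).trace := by rw [Matrix.conjTranspose_mul]
    _ = (M.conjTranspose * ρ).trace := by rw [hρh, Matrix.trace_mul_comm]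

/-- The anticommutativity bound (Proposition 2 of the paper, for a pair and its product):
for anticommuting Hermitian unitaries `A`, `B` and a state `ρ`,
`⟨A⟩² + ⟨B⟩² + ⟨AB⟩² ≤ 1`. -/
lemma core {ρ A B : Matrix d d ℂ}
    (hρ : ρ.PosSemidef) (hρt : ρ.trace = 1)
    (hAh : A.conjTranspose = A) (hBh : B.conjTranspose = B)
    (hA2 : A * A = 1) (hB2 : B * B = 1) (hAB : A * B = -(B * A)) :
    ‖(A * ρ).trace‖ ^ 2 + ‖(B * ρ).trace‖ ^ 2
      + ‖(A * B * ρ).trace‖ ^ 2 ≤ 1 := by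
  have hρh : ρ.conjTranspose = ρ := hρ.isHermitian
  set x : ℝ := ((A * ρ).trace).re with hx
  set y : ℝ := ((B * ρ).trace).re with hy
  set z : ℝ := ((A * B * ρ).trace).im with hz
  have hxr : (A * ρ).trace = (x : ℂ) := by
    apply Complex.ext
    · simp [hx]
    · have := Complex.conj_eq_iff_im.mp (by rw [conj_trace_mul hρh, hAh])
      simpa using this
  have hyr : (B * ρ).trace = (y : ℂ) := by
    apply Complex.ext
    · simp [hy]
    · have := Complex.conj_eq_iff_im.mp (by rw [conj_trace_mul hρh, hBh])
      simpa using this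
  have hABh : (A * B).conjTranspose = -(A * B) := by
    rw [Matrix.conjTranspose_mul, hAh, hBh, hAB, neg_neg]
  have hzr : (A * B * ρ).trace = (z : ℂ) * Complex.I := by
    have h1 : (starRingEnd ℂ) ((A * B * ρ).trace) = -((A * B * ρ).trace) := by
      rw [conj_trace_mul hρh, hABh, Matrix.neg_mul, Matrix.trace_neg]
    have h2 : ((A * B * ρ).trace).re = 0 := by
      have := congrArg Complex.re h1
      simp only [Complex.conj_re, Complex.neg_re] at this
      linarith
    apply Complex.ext <;> simp [h2, hz]
  set C : Matrix d d ℂ := (-Complex.I) • (A * B) with hC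
  have hABA : A * B * A = -B := by
    rw [hAB, Matrix.neg_mul, mul_assoc, hA2, mul_one]
  have hBAB : B * (A * B) = -A := by
    rw [hAB, mul_neg, ← mul_assoc, hB2, one_mul]
  have hCh : C.conjTranspose = C := by
    rw [hC, Matrix.conjTranspose_smul, hABh]
    simp [smul_neg]
  have hC2 : C * C = 1 := by
    rw [hC, Matrix.smul_mul, Matrix.mul_smul, smul_smul]
    have : (A * B) * (A * B) = -1 := by
      rw [← mul_assoc, hABA, Matrix.neg_mul, hB2]
    rw [this]
    simp [Complex.I_mul_I]
  have hAC : A * C = -(C * A) := by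
    rw [hC, Matrix.mul_smul, Matrix.smul_mul, hABA, ← mul_assoc, hA2, one_mul, smul_neg,
      neg_neg]
  have hBC : B * C = -(C * B) := by
    rw [hC, Matrix.mul_smul, Matrix.smul_mul, hBAB, mul_assoc, hB2, mul_one, smul_neg]
  have hCtr : (C * ρ).trace = (z : ℂ) := by
    rw [hC, Matrix.smul_mul, Matrix.trace_smul, hzr, smul_eq_mul]
    ring_nf
    simp [Complex.I_sq]
  set O : Matrix d d ℂ := (x : ℂ) • A + (y : ℂ) • B + (z : ℂ) • C with hO
  set t : ℝ := x ^ 2 + y ^ 2 + z ^ 2 with ht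
  have hOh : O.conjTranspose = O := by
    rw [hO]
    simp only [Matrix.conjTranspose_add, Matrix.conjTranspose_smul, hAh, hBh, hCh]
    simp [Complex.conj_ofReal]
  have hO2 : O * O = ((t : ℝ) : ℂ) • 1 := by
    rw [hO]
    simp only [add_mul, mul_add, Matrix.smul_mul, Matrix.mul_smul, smul_smul,
      hA2, hB2, hC2, hAB, hAC, hBC]
    push_cast [ht]
    module
  have hOtr : (O * ρ).trace = ((t : ℝ) : ℂ) := by
    rw [hO]
    simp only [Matrix.add_mul, Matrix.smul_mul, Matrix.trace_add, Matrix.trace_smul,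
      hxr, hyr, hCtr, smul_eq_mul]
    push_cast [ht]
    ring
  set M : Matrix d d ℂ := ((t : ℝ) : ℂ) • 1 - O with hM
  have hMh : M.conjTranspose = M := by
    rw [hM]
    simp [Matrix.conjTranspose_smul, hOh, Complex.conj_ofReal]
  have hMM : M.conjTranspose * M = (((t ^ 2 + t : ℝ)) : ℂ) • 1 - ((2 * t : ℝ) : ℂ) • O := by
    rw [hMh, hM]
    simp only [sub_mul, mul_sub, Matrix.smul_mul, Matrix.mul_smul, smul_smul, hO2,
      mul_one, one_mul]
    push_cast
    module
  have hpos : 0 ≤ ((M.conjTranspose * M) * ρ).trace :=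
    trace_mul_psd_nonneg (Matrix.posSemidef_conjTranspose_mul_self M) hρ
  have htr : ((M.conjTranspose * M) * ρ).trace = ((t ^ 2 + t - 2 * t * t : ℝ) : ℂ) := by
    rw [hMM]
    simp only [Matrix.sub_mul, Matrix.smul_mul, Matrix.trace_sub, Matrix.trace_smul,
      one_mul, hρt, hOtr, smul_eq_mul]
    push_cast
    ring
  rw [htr] at hpos
  have hreal : (0 : ℝ) ≤ t ^ 2 + t - 2 * t * t := by
    exact_mod_cast hpos
  have htnn : 0 ≤ t := by positivity
  have ht1 : t ≤ 1 := by nlinarith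
  have h1 : ‖(A * ρ).trace‖ ^ 2 = x ^ 2 := by
    rw [hxr, Complex.norm_real, Real.norm_eq_abs, sq_abs]
  have h2 : ‖(B * ρ).trace‖ ^ 2 = y ^ 2 := by
    rw [hyr, Complex.norm_real, Real.norm_eq_abs, sq_abs]
  have h3 : ‖(A * B * ρ).trace‖ ^ 2 = z ^ 2 := by
    rw [hzr]
    simp [Complex.norm_real, sq_abs, mul_pow]
  rw [h1, h2, h3]
  linarith [ht ▸ ht1]

lemma tOp_diag_bound {V : Type*} [Fintype V] [DecidableEq V]
    {A : V → Matrix (Fin 2) (Fin 2) ℂ} (h : ∀ v, A v = 1 ∨ A v = pZ)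
    {ρ : Matrix (V → Fin 2) (V → Fin 2) ℂ} (hρ : ρ.PosSemidef) (hρt : ρ.trace = 1) :
    ‖(tOp A * ρ).trace‖ ≤ 1 := by
  apply abs_trace_le_one hρ hρt
  · intro x y hxy
    obtain ⟨v, hv⟩ := Function.ne_iff.mp hxy
    exact Finset.prod_eq_zero (Finset.mem_univ v) ((diag_offdiag (h v)).1 _ _ hv)
  · intro x
    rw [tOp_apply]
    calc ‖∏ v, A v (x v) (x v)‖ = ∏ v, ‖A v (x v) (x v)‖ :=
          norm_prod _ _
      _ = 1 := Finset.prod_eq_one fun v _ => (diag_offdiag (h v)).2 _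
      _ ≤ 1 := le_refl 1

end psd

/-- The reindexing of qubit configurations along a partition. -/
def partEquiv {n k : ℕ} (P : Fin n → Fin k) :
    (Fin n → Fin 2) ≃ ∀ j : Fin k, {v : Fin n // P v = j} → Fin 2 where
  toFun f j v := f v.1
  invFun F v := F (P v) ⟨v, rfl⟩
  left_inv f := rfl
  right_inv F := by
    funext j v
    obtain ⟨v, hv⟩ := v
    subst hv
    rfl

/-- Trace of a tensor-product observable against a product state factorizes. -/
lemma trace_factor {n k : ℕ} (P : Fin n → Fin k)
    (ρs : ∀ j : Fin k,
      Matrix ({v : Fin n // P v = j} → Fin 2) ({v : Fin n // P v = j} → Fin 2) ℂ)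
    (A : Fin n → Matrix (Fin 2) (Fin 2) ℂ) :
    (tOp A * prodState P ρs).trace
      = ∏ j, ((tOp fun v : {v : Fin n // P v = j} => A v.1) * ρs j).trace := by
  classical
  have hrhs : ∀ j, ((tOp fun v : {v : Fin n // P v = j} => A v.1) * ρs j).trace
      = ∑ x, ∑ y, (∏ v, A v.1 (x v) (y v)) * ρs j y x := by
    intro j
    simp [Matrix.trace, Matrix.diag, Matrix.mul_apply, tOp_apply]
  have hlhs : (tOp A * prodState P ρs).trace
      = ∑ f : Fin n → Fin 2, ∑ g : Fin n → Fin 2,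
          ∏ j, ((∏ v : {v : Fin n // P v = j}, A v.1 (f v.1) (g v.1)) *
            ρs j (fun v => g v.1) (fun v => f v.1)) := by
    simp only [Matrix.trace, Matrix.diag, Matrix.mul_apply, tOp_apply, prodState,
      Matrix.of_apply]
    refine Finset.sum_congr rfl fun f _ => Finset.sum_congr rfl fun g _ => ?_
    rw [← Fintype.prod_fiberwise P (fun v => A v (f v) (g v)), ← Finset.prod_mul_distrib]
  set h : ∀ j : Fin k, ({v : Fin n // P v = j} → Fin 2) → ({v : Fin n // P v = j} → Fin 2) → ℂ :=
    fun j x y => (∏ v, A v.1 (x v) (y v)) * ρs j y x with hdef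
  calc (tOp A * prodState P ρs).trace
      = ∑ f : Fin n → Fin 2, ∑ g : Fin n → Fin 2,
          ∏ j, h j (partEquiv P f j) (partEquiv P g j) := hlhs
    _ = ∑ F : ∀ j : Fin k, {v : Fin n // P v = j} → Fin 2,
          ∑ G : ∀ j : Fin k, {v : Fin n // P v = j} → Fin 2, ∏ j, h j (F j) (G j) := by
        rw [← Equiv.sum_comp (partEquiv P)
          (fun F => ∑ G : ∀ j : Fin k, {v : Fin n // P v = j} → Fin 2, ∏ j, h j (F j) (G j))]
        refine Finset.sum_congr rfl fun f _ => ?_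
        rw [← Equiv.sum_comp (partEquiv P) (fun G => ∏ j, h j (partEquiv P f j) (G j))]
    _ = ∑ F : ∀ j : Fin k, {v : Fin n // P v = j} → Fin 2, ∏ j, ∑ y, h j (F j) y := by
        refine Finset.sum_congr rfl fun F _ => ?_
        exact (Fintype.prod_sum fun j y => h j (F j) y).symm
    _ = ∏ j, ∑ x, ∑ y, h j x y := (Fintype.prod_sum fun j x => ∑ y, h j x y).symm
    _ = ∏ j, ((tOp fun v : {v : Fin n // P v = j} => A v.1) * ρs j).trace := by
        refine Finset.prod_congr rfl fun j _ => ?_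
        rw [hrhs j]

/-- The single-qubit factors of a stabilizer generator. -/
noncomputable def fam {n : ℕ} (G : SimpleGraph (Fin n)) [DecidableRel G.Adj] (i : Fin n) :
    Fin n → Matrix (Fin 2) (Fin 2) ℂ :=
  fun j => if j = i then pX else if G.Adj i j then pZ else 1

lemma stab_eq_tOp {n : ℕ} (G : SimpleGraph (Fin n)) [DecidableRel G.Adj] (i : Fin n) :
    stab G i = tOp (fam G i) := rfl

lemma fam_pauli {n : ℕ} (G : SimpleGraph (Fin n)) [DecidableRel G.Adj] (i v : Fin n) :
    fam G i v = 1 ∨ fam G i v = pX ∨ fam G i v = pZ := by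
  unfold fam; split_ifs <;> tauto

lemma fam_diag {n : ℕ} (G : SimpleGraph (Fin n)) [DecidableRel G.Adj] {i v : Fin n}
    (hv : v ≠ i) : fam G i v = 1 ∨ fam G i v = pZ := by
  unfold fam; rw [if_neg hv]; split_ifs <;> tauto

lemma fam_self {n : ℕ} (G : SimpleGraph (Fin n)) [DecidableRel G.Adj] (i : Fin n) :
    fam G i i = pX := if_pos rfl

lemma fam_adj {n : ℕ} (G : SimpleGraph (Fin n)) [DecidableRel G.Adj] {i v : Fin n}
    (hv : v ≠ i) (h : G.Adj i v) : fam G i v = pZ := by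
  unfold fam; rw [if_neg hv, if_pos h]

lemma prod_le_two {k : ℕ} (F : Fin k → ℝ) (h0 : ∀ j, 0 ≤ F j) (i1 i2 : Fin k) (hne : i1 ≠ i2)
    (hrest : ∀ j, j ≠ i1 → j ≠ i2 → F j ≤ 1) : ∏ j, F j ≤ F i1 * F i2 := by
  classical
  rw [← Finset.mul_prod_erase Finset.univ F (Finset.mem_univ i1),
    ← Finset.mul_prod_erase _ F (Finset.mem_erase.mpr ⟨hne.symm, Finset.mem_univ i2⟩),
    ← mul_assoc]
  have hle : ∏ j ∈ (Finset.univ.erase i1).erase i2, F j ≤ 1 := by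
    apply Finset.prod_le_one
    · intro j _; exact h0 j
    · intro j hj
      rw [Finset.mem_erase, Finset.mem_erase] at hj
      exact hrest j hj.2.1 hj.1
  exact mul_le_of_le_one_right (mul_nonneg (h0 i1) (h0 i2)) hle

/-- **Stabilizer triple bound for product states across a cut edge.** If `ρ = ⊗_j ρ_j` is a
product state with respect to a partition `P` of the `n` qubits and `(a,b)` is an edge of `G`
with `a`, `b` in different parts, then `|⟨S_a⟩| + |⟨S_b⟩| + |⟨S_a S_b⟩| ≤ 1`. -/
theorem stmt9 {n k : ℕ} (G : SimpleGraph (Fin n)) [DecidableRel G.Adj]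
    (P : Fin n → Fin k)
    (ρs : ∀ j : Fin k,
      Matrix ({v : Fin n // P v = j} → Fin 2) ({v : Fin n // P v = j} → Fin 2) ℂ)
    (hρs : ∀ j, (ρs j).PosSemidef ∧ (ρs j).trace = 1)
    (a b : Fin n) (hab : G.Adj a b) (hP : P a ≠ P b) :
    ‖(stab G a * prodState P ρs).trace‖ +
      ‖(stab G b * prodState P ρs).trace‖ +
      ‖(stab G a * stab G b * prodState P ρs).trace‖ ≤ 1 := by
  classical
  have hba : b ≠ a := hab.symm.ne
  have hab' : a ≠ b := hab.ne
  -- the per-part restrictions of the two stabilizers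
  set Aj : ∀ j : Fin k, Matrix ({v : Fin n // P v = j} → Fin 2)
      ({v : Fin n // P v = j} → Fin 2) ℂ :=
    fun j => tOp fun v : {v : Fin n // P v = j} => fam G a v.1 with hAj
  set Bj : ∀ j : Fin k, Matrix ({v : Fin n // P v = j} → Fin 2)
      ({v : Fin n // P v = j} → Fin 2) ℂ :=
    fun j => tOp fun v : {v : Fin n // P v = j} => fam G b v.1 with hBj
  -- factorized traces
  have hta : (stab G a * prodState P ρs).trace = ∏ j, (Aj j * ρs j).trace := by
    rw [stab_eq_tOp]; exact trace_factor P ρs (fam G a)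
  have htb : (stab G b * prodState P ρs).trace = ∏ j, (Bj j * ρs j).trace := by
    rw [stab_eq_tOp]; exact trace_factor P ρs (fam G b)
  have htab : (stab G a * stab G b * prodState P ρs).trace
      = ∏ j, (Aj j * Bj j * ρs j).trace := by
    rw [stab_eq_tOp, stab_eq_tOp, tOp_mul, trace_factor P ρs]
    refine Finset.prod_congr rfl fun j _ => ?_
    rw [show (tOp fun v : {v : Fin n // P v = j} => fam G a v.1 * fam G b v.1)
        = Aj j * Bj j from (tOp_mul _ _).symm]
  set xs : Fin k → ℝ := fun j => ‖(Aj j * ρs j).trace‖ with hxs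
  set ys : Fin k → ℝ := fun j => ‖(Bj j * ρs j).trace‖ with hys
  set zs : Fin k → ℝ := fun j => ‖(Aj j * Bj j * ρs j).trace‖ with hzs
  have hxs0 : ∀ j, 0 ≤ xs j := fun j => norm_nonneg _
  have hys0 : ∀ j, 0 ≤ ys j := fun j => norm_nonneg _
  have hzs0 : ∀ j, 0 ≤ zs j := fun j => norm_nonneg _
  -- bounds away from the two distinguished parts
  have hxrest : ∀ j, j ≠ P a → xs j ≤ 1 := by
    intro j hj
    show ‖((tOp fun v : {v : Fin n // P v = j} => fam G a v.1) * ρs j).trace‖ ≤ 1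
    apply tOp_diag_bound _ (hρs j).1 (hρs j).2
    intro v
    exact fam_diag G fun hc => hj (by rw [← v.2, hc])
  have hyrest : ∀ j, j ≠ P b → ys j ≤ 1 := by
    intro j hj
    show ‖((tOp fun v : {v : Fin n // P v = j} => fam G b v.1) * ρs j).trace‖ ≤ 1
    apply tOp_diag_bound _ (hρs j).1 (hρs j).2
    intro v
    exact fam_diag G fun hc => hj (by rw [← v.2, hc])
  have hzrest : ∀ j, j ≠ P a → j ≠ P b → zs j ≤ 1 := by
    intro j hja hjb
    have hABj : Aj j * Bj j
        = tOp fun v : {v : Fin n // P v = j} => fam G a v.1 * fam G b v.1 := tOp_mul _ _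
    show ‖(Aj j * Bj j * ρs j).trace‖ ≤ 1
    rw [hABj]
    apply tOp_diag_bound _ (hρs j).1 (hρs j).2
    intro v
    exact diag_mul (fam_diag G fun hc => hja (by rw [← v.2, hc]))
      (fam_diag G fun hc => hjb (by rw [← v.2, hc]))
  -- Hermitian-unitary structure of all restrictions
  have hApauli : ∀ j, (Aj j).conjTranspose = Aj j ∧ Aj j * Aj j = 1 := fun j =>
    tOp_pauli fun v => fam_pauli G a v.1
  have hBpauli : ∀ j, (Bj j).conjTranspose = Bj j ∧ Bj j * Bj j = 1 := fun j =>
    tOp_pauli fun v => fam_pauli G b v.1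
  -- anticommutation at the two distinguished parts
  have hACa : Aj (P a) * Bj (P a) = -(Bj (P a) * Aj (P a)) := by
    apply tOp_anticomm _ _ (⟨a, rfl⟩ : {v : Fin n // P v = P a})
    · show fam G a a * fam G b a = -(fam G b a * fam G a a)
      rw [fam_self, fam_adj G hab' hab.symm]
      exact pXZ
    · intro v hv
      have hva : v.1 ≠ a := fun hc => hv (Subtype.ext hc)
      have hvb : v.1 ≠ b := fun hc => hP (by rw [← v.2, hc])
      exact diag_comm (fam_diag G hva) (fam_diag G hvb)
  have hACb : Aj (P b) * Bj (P b) = -(Bj (P b) * Aj (P b)) := by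
    apply tOp_anticomm _ _ (⟨b, rfl⟩ : {v : Fin n // P v = P b})
    · show fam G a b * fam G b b = -(fam G b b * fam G a b)
      rw [fam_self, fam_adj G hba hab]
      exact pZX
    · intro v hv
      have hvb : v.1 ≠ b := fun hc => hv (Subtype.ext hc)
      have hva : v.1 ≠ a := fun hc => hP (by rw [← v.2, hc])
      exact diag_comm (fam_diag G hva) (fam_diag G hvb)
  -- the anticommutativity bound at each of the two parts
  have hcore_a : xs (P a) ^ 2 + ys (P a) ^ 2 + zs (P a) ^ 2 ≤ 1 :=
    core (hρs _).1 (hρs _).2 (hApauli _).1 (hBpauli _).1 (hApauli _).2 (hBpauli _).2 hACa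
  have hcore_b : xs (P b) ^ 2 + ys (P b) ^ 2 + zs (P b) ^ 2 ≤ 1 :=
    core (hρs _).1 (hρs _).2 (hApauli _).1 (hBpauli _).1 (hApauli _).2 (hBpauli _).2 hACb
  -- assemble
  have h1 : ∏ j, xs j ≤ xs (P a) * xs (P b) :=
    prod_le_two xs hxs0 _ _ hP fun j hj _ => hxrest j hj
  have h2 : ∏ j, ys j ≤ ys (P a) * ys (P b) :=
    prod_le_two ys hys0 _ _ hP fun j _ hj => hyrest j hj
  have h3 : ∏ j, zs j ≤ zs (P a) * zs (P b) :=
    prod_le_two zs hzs0 _ _ hP hzrest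
  rw [hta, htb, htab, norm_prod, norm_prod, norm_prod]
  show (∏ j, xs j) + (∏ j, ys j) + (∏ j, zs j) ≤ 1
  nlinarith [h1, h2, h3, hcore_a, hcore_b, sq_nonneg (xs (P a) - xs (P b)),
    sq_nonneg (ys (P a) - ys (P b)), sq_nonneg (zs (P a) - zs (P b)),
    hxs0 (P a), hxs0 (P b), hys0 (P a), hys0 (P b), hzs0 (P a), hzs0 (P b)]
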